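/- Let λ > 0, let u : ℝ → ℝ be a solution of u''(y) = λ²·u(y) for all y, and let x : [0, 1] → ℝ be four times continuously differentiable with x'(q) > 0 for all q ∈ [0, 1]. Assume in addition that the fourth-order (supraconvergence) condition x''(q)·u'''(x(q)) + (1/4)·(x'(q))²·u''''(x(q)) = 0 holds for every q ∈ [0, 1]. Then there exists a constant C > 0 such that for all h ∈ (0, 1/2] and all q ∈ [h, 1 − h], the consistency error satisfies |ψ_h(q)| ≤ C·h⁴; that is, the central difference scheme on the non-uniform grid generated by x is fourth-order consistent. -/

import Mathlib

open Set Nat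

/-- Two-sided Taylor bound with Lagrange-type remainder estimate. -/
lemma my_taylor_bound {f : ℝ → ℝ} {A B : ℝ} (hAB : A < B) (n : ℕ)
    (hf : ContDiffOn ℝ (n + 1) f (Set.Icc A B)) {M : ℝ}
    (hM : ∀ y ∈ Set.Icc A B, |iteratedDerivWithin (n + 1) f (Set.Icc A B) y| ≤ M)
    {c d : ℝ} (hc : c ∈ Set.Icc A B) (hd : d ∈ Set.Icc A B) :
    |f d - taylorWithinEval f n (Set.Icc A B) c d| ≤ M * |d - c| ^ (n + 1) / n.factorial := by
  have hunique : UniqueDiffOn ℝ (Set.Icc A B) := uniqueDiffOn_Icc hAB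
  have hfn : ContDiffOn ℝ n f (Set.Icc A B) := hf.of_le (by exact_mod_cast Nat.le_succ n)
  have hf' : DifferentiableOn ℝ (iteratedDerivWithin n f (Set.Icc A B)) (Set.Icc A B) :=
    hf.differentiableOn_iteratedDerivWithin (by exact_mod_cast n.lt_succ_self) hunique
  have hsub : Set.uIcc c d ⊆ Set.Icc A B := Set.uIcc_subset_Icc hc hd
  have hM0 : 0 ≤ M := le_trans (abs_nonneg _) (hM c hc)
  have key : ∀ y ∈ Set.uIcc c d,
      HasDerivWithinAt (fun t => taylorWithinEval f n (Set.Icc A B) t d)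
        (((n ! : ℝ)⁻¹ * (d - y) ^ n) • iteratedDerivWithin (n + 1) f (Set.Icc A B) y)
        (Set.uIcc c d) y := fun y hy =>
    (hasDerivWithinAt_taylorWithinEval_at_Icc d hAB (hsub hy) hfn hf').mono hsub
  have hdist : ∀ y ∈ Set.uIcc c d, |d - y| ≤ |d - c| := by
    intro y hy
    rcases le_total c d with hcd | hcd
    · rw [Set.uIcc_of_le hcd] at hy
      obtain ⟨hy1, hy2⟩ := hy
      rw [abs_of_nonneg (by linarith), abs_of_nonneg (by linarith)]; linarith
    · rw [Set.uIcc_of_ge hcd] at hy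
      obtain ⟨hy1, hy2⟩ := hy
      rw [abs_of_nonpos (by linarith), abs_of_nonpos (by linarith)]; linarith
  have bound : ∀ y ∈ Set.uIcc c d,
      ‖((n.factorial : ℝ)⁻¹ * (d - y) ^ n) • iteratedDerivWithin (n + 1) f (Set.Icc A B) y‖
        ≤ (n.factorial : ℝ)⁻¹ * |d - c| ^ n * M := by
    intro y hy
    rw [norm_smul, Real.norm_eq_abs, Real.norm_eq_abs, abs_mul, abs_inv, abs_pow, Nat.abs_cast]
    have h1 : |d - y| ^ n ≤ |d - c| ^ n := pow_le_pow_left₀ (abs_nonneg _) (hdist y hy) n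
    have h2 : |iteratedDerivWithin (n + 1) f (Set.Icc A B) y| ≤ M := hM y (hsub hy)
    exact mul_le_mul (mul_le_mul_of_nonneg_left h1 (by positivity)) h2 (abs_nonneg _)
      (by positivity)
  have mv := (convex_uIcc c d).norm_image_sub_le_of_norm_hasDerivWithin_le key bound
    left_mem_uIcc right_mem_uIcc
  rw [taylorWithinEval_self] at mv
  calc |f d - taylorWithinEval f n (Set.Icc A B) c d|
      ≤ (n.factorial : ℝ)⁻¹ * |d - c| ^ n * M * |d - c| := by
        simpa [Real.norm_eq_abs] using mv
    _ = M * |d - c| ^ (n + 1) / n.factorial := by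
        rw [pow_succ]
        have : (n.factorial : ℝ) ≠ 0 := Nat.cast_ne_zero.mpr n.factorial_ne_zero
        field_simp

/-- within-derivatives equal global derivatives for globally smooth functions. -/
lemma my_itw_eq {f : ℝ → ℝ} {s : Set ℝ} (hs : UniqueDiffOn ℝ s)
    (hf : ∀ m : ℕ, ContDiff ℝ m f) :
    ∀ (n : ℕ), ∀ y ∈ s, iteratedDerivWithin n f s y = iteratedDeriv n f y := by
  intro n
  induction n with
  | zero => intro y hy; simp [iteratedDerivWithin_zero, iteratedDeriv_zero]
  | succ n ih =>
    intro y hy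
    rw [iteratedDerivWithin_succ, iteratedDeriv_succ]
    have hcongr : derivWithin (iteratedDerivWithin n f s) s y
        = derivWithin (iteratedDeriv n f) s y :=
      derivWithin_congr (fun z hz => ih z hz) (ih y hy)
    rw [hcongr]
    have hdiff : DifferentiableAt ℝ (iteratedDeriv n f) y :=
      ((hf (n + 1)).differentiable_iteratedDeriv n
        (by exact_mod_cast n.lt_succ_self)).differentiableAt
    exact hdiff.derivWithin (hs y hy)

/-- bootstrap smoothness of solutions of u'' = λ² u. -/
lemma my_u_smooth {lam : ℝ} {u : ℝ → ℝ} (hu : ContDiff ℝ 2 u)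
    (hode : ∀ y : ℝ, deriv (deriv u) y = lam ^ 2 * u y) :
    ∀ n : ℕ, ContDiff ℝ n u := by
  have key : ∀ n : ℕ, ContDiff ℝ (n + 2) u := by
    intro n
    induction n with
    | zero => exact_mod_cast hu
    | succ n ih =>
      have hdu : Differentiable ℝ u := hu.differentiable (by norm_num)
      have hdu' : Differentiable ℝ (deriv u) := by
        have := (contDiff_succ_iff_deriv.mp (show ContDiff ℝ (1 + 1) u from by exact_mod_cast hu)).2.2
        exact this.differentiable (by norm_num)
      have hdd : ContDiff ℝ (n + 1) (deriv (deriv u)) := by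
        have : deriv (deriv u) = fun y => lam ^ 2 * u y := funext hode
        rw [this]
        exact contDiff_const.mul (ih.of_le (by exact_mod_cast Nat.le_succ _))
      have h2 : ContDiff ℝ ((n + 1) + 1) (deriv u) := by
        rw [contDiff_succ_iff_deriv]
        exact ⟨hdu', by simp, hdd⟩
      have h3 : ContDiff ℝ (((n + 1) + 1) + 1) u := by
        rw [contDiff_succ_iff_deriv]
        exact ⟨hdu, by simp, h2⟩
      exact_mod_cast h3
  intro n
  exact (key n).of_le (by exact_mod_cast Nat.le_add_right n 2)

set_option maxHeartbeats 1600000 in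
theorem stmt_14 (lam : ℝ) (hlam : 0 < lam)
    (u : ℝ → ℝ) (hu : ContDiff ℝ 2 u)
    (hode : ∀ y : ℝ, deriv (deriv u) y = lam ^ 2 * u y)
    (x : ℝ → ℝ) (hx : ContDiffOn ℝ 4 x (Set.Icc 0 1))
    (hx' : ∀ q ∈ Set.Icc (0 : ℝ) 1, 0 < derivWithin x (Set.Icc 0 1) q)
    (hcond : ∀ q ∈ Set.Icc (0 : ℝ) 1,
      iteratedDerivWithin 2 x (Set.Icc 0 1) q * iteratedDeriv 3 u (x q)
        + 1 / 4 * (derivWithin x (Set.Icc 0 1) q) ^ 2 * iteratedDeriv 4 u (x q) = 0)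
    (ψ : ℝ → ℝ → ℝ)
    (hψ : ψ = fun h q =>
      -(((u (x (q + h)) - u (x q)) / (x (q + h) - x q)
            - (u (x q) - u (x (q - h))) / (x q - x (q - h)))
          / (((x (q + h) - x q) + (x q - x (q - h))) / 2))
        + lam ^ 2 * u (x q)) :
    ∃ C > 0, ∀ h ∈ Set.Ioc (0 : ℝ) (1 / 2), ∀ q ∈ Set.Icc h (1 - h),
      |ψ h q| ≤ C * h ^ 4 := by
  have hs : UniqueDiffOn ℝ (Set.Icc (0:ℝ) 1) := uniqueDiffOn_Icc (by norm_num)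
  have husm : ∀ n : ℕ, ContDiff ℝ n u := my_u_smooth hu hode
  -- differentiability of u and deriv u
  have hdiffu : ∀ y, DifferentiableAt ℝ u y := fun y => (husm 1).differentiable (by norm_num) y
  have hderiv_eq : deriv u = iteratedDeriv 1 u := (iteratedDeriv_one (f := u)).symm
  have hdiffu' : ∀ y, DifferentiableAt ℝ (deriv u) y := by
    have := (husm 2).differentiable_iteratedDeriv 1 (by exact_mod_cast Nat.one_lt_two)
    rw [hderiv_eq]; exact fun y => this y
  have hcontdu : Continuous (deriv u) := by
    rw [hderiv_eq]
    exact (husm 1).continuous_iteratedDeriv 1 le_rfl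
  -- derivative formulas for u
  have e2 : iteratedDeriv 2 u = fun y => lam ^ 2 * u y := by
    have h1 : iteratedDeriv 2 u = deriv (deriv u) := by
      rw [show (2:ℕ) = 1 + 1 from rfl, iteratedDeriv_succ, iteratedDeriv_one]
    rw [h1]; exact funext hode
  have e3 : iteratedDeriv 3 u = fun y => lam ^ 2 * deriv u y := by
    rw [show (3:ℕ) = 2 + 1 from rfl, iteratedDeriv_succ, e2]
    funext y
    rw [deriv_const_mul _ (hdiffu y)]
  have e4 : iteratedDeriv 4 u = fun y => lam ^ 4 * u y := by
    rw [show (4:ℕ) = 3 + 1 from rfl, iteratedDeriv_succ, e3]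
    funext y
    rw [deriv_const_mul _ (hdiffu' y), hode y]; ring
  have e5 : iteratedDeriv 5 u = fun y => lam ^ 4 * deriv u y := by
    rw [show (5:ℕ) = 4 + 1 from rfl, iteratedDeriv_succ, e4]
    funext y
    rw [deriv_const_mul _ (hdiffu y)]
  have e6 : iteratedDeriv 6 u = fun y => lam ^ 6 * u y := by
    rw [show (6:ℕ) = 5 + 1 from rfl, iteratedDeriv_succ, e5]
    funext y
    rw [deriv_const_mul _ (hdiffu' y), hode y]; ring
  -- bounds for derivatives of x
  have hxcont : ∀ k : ℕ, k ≤ 4 →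
      ContinuousOn (iteratedDerivWithin k x (Set.Icc 0 1)) (Set.Icc 0 1) := fun k hk =>
    hx.continuousOn_iteratedDerivWithin (by exact_mod_cast hk) hs
  obtain ⟨Mx1, hMx1⟩ := isCompact_Icc.exists_bound_of_continuousOn (hxcont 1 (by norm_num))
  obtain ⟨Mx2, hMx2⟩ := isCompact_Icc.exists_bound_of_continuousOn (hxcont 2 (by norm_num))
  obtain ⟨Mx3, hMx3⟩ := isCompact_Icc.exists_bound_of_continuousOn (hxcont 3 (by norm_num))
  obtain ⟨Mx4, hMx4⟩ := isCompact_Icc.exists_bound_of_continuousOn (hxcont 4 (by norm_num))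
  set Mx : ℝ := max (max Mx1 Mx2) (max Mx3 Mx4) with hMx_def
  have hbx1 : ∀ t ∈ Set.Icc (0:ℝ) 1, |derivWithin x (Set.Icc 0 1) t| ≤ Mx := by
    intro t ht
    rw [← iteratedDerivWithin_one]
    exact le_trans (hMx1 t ht) (le_trans (le_max_left _ _) (le_max_left _ _))
  have hbx2 : ∀ t ∈ Set.Icc (0:ℝ) 1, |iteratedDerivWithin 2 x (Set.Icc 0 1) t| ≤ Mx := fun t ht =>
    le_trans (hMx2 t ht) (le_trans (le_max_right _ _) (le_max_left _ _))
  have hbx3 : ∀ t ∈ Set.Icc (0:ℝ) 1, |iteratedDerivWithin 3 x (Set.Icc 0 1) t| ≤ Mx := fun t ht =>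
    le_trans (hMx3 t ht) (le_trans (le_max_left _ _) (le_max_right _ _))
  have hbx4 : ∀ t ∈ Set.Icc (0:ℝ) 1, |iteratedDerivWithin 4 x (Set.Icc 0 1) t| ≤ Mx := fun t ht =>
    le_trans (hMx4 t ht) (le_trans (le_max_right _ _) (le_max_right _ _))
  have hMx0 : 0 ≤ Mx := le_trans (abs_nonneg _) (hbx1 0 (by norm_num))
  -- minimum of x' on [0,1]
  have hdcont : ContinuousOn (derivWithin x (Set.Icc 0 1)) (Set.Icc 0 1) :=
    (hxcont 1 (by norm_num)).congr (fun t ht => (congrFun iteratedDerivWithin_one t).symm)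
  obtain ⟨q0, hq0, hq0min⟩ := isCompact_Icc.exists_isMinOn
    (Set.nonempty_Icc.mpr (by norm_num)) hdcont
  set δ : ℝ := derivWithin x (Set.Icc 0 1) q0 with hδ_def
  have hδpos : 0 < δ := hx' q0 hq0
  have hδle : ∀ t ∈ Set.Icc (0:ℝ) 1, δ ≤ derivWithin x (Set.Icc 0 1) t := fun t ht =>
    hq0min ht
  -- deriv = derivWithin on interior
  have hderiv_int : ∀ t ∈ Set.Ioo (0:ℝ) 1, deriv x t = derivWithin x (Set.Icc 0 1) t := by
    intro t ht
    rw [← derivWithin_of_mem_nhds (Icc_mem_nhds ht.1 ht.2)]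
  have hxdiffAt : ∀ t ∈ Set.Ioo (0:ℝ) 1, DifferentiableAt ℝ x t := by
    intro t ht
    exact ((hx.differentiableOn (by norm_num)).differentiableAt (Icc_mem_nhds ht.1 ht.2))
  have hxconts : ContinuousOn x (Set.Icc 0 1) := hx.continuousOn
  -- growth bounds
  have hgrow : ∀ a b : ℝ, a ∈ Set.Icc (0:ℝ) 1 → b ∈ Set.Icc (0:ℝ) 1 → a ≤ b →
      δ * (b - a) ≤ x b - x a := by
    intro a b ha hb hab
    have hmono : MonotoneOn (fun t => x t - δ * t) (Set.Icc (0:ℝ) 1) := by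
      apply monotoneOn_of_deriv_nonneg (convex_Icc 0 1)
      · exact hxconts.sub (continuousOn_const.mul continuousOn_id)
      · intro t ht
        rw [interior_Icc] at ht
        exact ((hxdiffAt t ht).sub ((differentiableAt_id.const_mul δ))).differentiableWithinAt
      · intro t ht
        rw [interior_Icc] at ht
        have hd : HasDerivAt (fun t => x t - δ * t) (deriv x t - δ * 1) t :=
          ((hxdiffAt t ht).hasDerivAt).sub ((hasDerivAt_id t).const_mul δ)
        rw [hd.deriv, hderiv_int t ht]
        have := hδle t (Ioo_subset_Icc_self ht)
        linarith
    have := hmono ha hb hab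
    simp only at this
    nlinarith
  have hLip : ∀ a b : ℝ, a ∈ Set.Icc (0:ℝ) 1 → b ∈ Set.Icc (0:ℝ) 1 → a ≤ b →
      x b - x a ≤ Mx * (b - a) := by
    intro a b ha hb hab
    have hmono : MonotoneOn (fun t => Mx * t - x t) (Set.Icc (0:ℝ) 1) := by
      apply monotoneOn_of_deriv_nonneg (convex_Icc 0 1)
      · exact (continuousOn_const.mul continuousOn_id).sub hxconts
      · intro t ht
        rw [interior_Icc] at ht
        exact ((differentiableAt_id.const_mul Mx).sub (hxdiffAt t ht)).differentiableWithinAt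
      · intro t ht
        rw [interior_Icc] at ht
        have hd : HasDerivAt (fun t => Mx * t - x t) (Mx * 1 - deriv x t) t :=
          ((hasDerivAt_id t).const_mul Mx).sub ((hxdiffAt t ht).hasDerivAt)
        rw [hd.deriv, hderiv_int t ht]
        have h1 := hbx1 t (Ioo_subset_Icc_self ht)
        have := abs_le.mp h1
        linarith [this.2]
    have := hmono ha hb hab
    simp only at this
    nlinarith
  -- image interval
  set K1 : ℝ := x 0 with hK1_def
  set K2 : ℝ := x 1 with hK2_def
  have hK : K1 < K2 := by
    have := hgrow 0 1 (by norm_num) (by norm_num) (by norm_num)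
    simp only [sub_zero, mul_one] at this
    linarith
  have himg : ∀ t ∈ Set.Icc (0:ℝ) 1, x t ∈ Set.Icc K1 K2 := by
    intro t ht
    constructor
    · have := hgrow 0 t (by norm_num) ht ht.1
      nlinarith [ht.1, hδpos.le]
    · have := hgrow t 1 ht (by norm_num) ht.2
      nlinarith [ht.2, hδpos.le]
  -- bounds for u and deriv u on [K1, K2]
  obtain ⟨B1, hB1⟩ := isCompact_Icc.exists_bound_of_continuousOn
    ((husm 0).continuous.continuousOn : ContinuousOn u (Set.Icc K1 K2))
  obtain ⟨B2, hB2⟩ := isCompact_Icc.exists_bound_of_continuousOn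
    (hcontdu.continuousOn : ContinuousOn (deriv u) (Set.Icc K1 K2))
  set Bu : ℝ := max B1 B2 with hBu_def
  have hbu : ∀ y ∈ Set.Icc K1 K2, |u y| ≤ Bu := fun y hy =>
    le_trans (hB1 y hy) (le_max_left _ _)
  have hbu' : ∀ y ∈ Set.Icc K1 K2, |deriv u y| ≤ Bu := fun y hy =>
    le_trans (hB2 y hy) (le_max_right _ _)
  have hBu0 : 0 ≤ Bu := le_trans (abs_nonneg _) (hbu K1 ⟨le_refl K1, hK.le⟩)
  -- within = global for u on [K1,K2]
  have hsK : UniqueDiffOn ℝ (Set.Icc K1 K2) := uniqueDiffOn_Icc hK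
  have hitw_u : ∀ n : ℕ, ∀ y ∈ Set.Icc K1 K2,
      iteratedDerivWithin n u (Set.Icc K1 K2) y = iteratedDeriv n u y := my_itw_eq hsK husm
  set MU : ℝ := lam ^ 6 * Bu with hMU_def
  have hMU0 : 0 ≤ MU := by positivity
  have hM6 : ∀ y ∈ Set.Icc K1 K2, |iteratedDerivWithin 6 u (Set.Icc K1 K2) y| ≤ MU := by
    intro y hy
    rw [hitw_u 6 y hy, show iteratedDeriv 6 u y = lam ^ 6 * u y from congrFun e6 y, abs_mul,
      abs_of_pos (by positivity : (0:ℝ) < lam ^ 6)]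
    exact mul_le_mul_of_nonneg_left (hbu y hy) (by positivity)
  -- the constant
  set C : ℝ := Mx * (lam ^ 2 * Bu) + 5 * Mx ^ 2 * (lam ^ 4 * Bu) + Mx ^ 3 * (lam ^ 4 * Bu)
      + MU * Mx ^ 5 / (60 * δ) + 1 with hC_def
  have hCpos : 0 < C := by
    have h1 : 0 ≤ Mx * (lam ^ 2 * Bu) := by positivity
    have h2 : 0 ≤ 5 * Mx ^ 2 * (lam ^ 4 * Bu) := by positivity
    have h3 : 0 ≤ Mx ^ 3 * (lam ^ 4 * Bu) := by positivity
    have h4 : 0 ≤ MU * Mx ^ 5 / (60 * δ) := by positivity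
    rw [hC_def]; linarith
  refine ⟨C, hCpos, ?_⟩
  rintro h ⟨hh0, hh12⟩ q ⟨hq1, hq2⟩
  have hh1 : h ≤ 1 := by linarith
  have hqmem : q ∈ Set.Icc (0:ℝ) 1 := ⟨by linarith, by linarith⟩
  have hqp : q + h ∈ Set.Icc (0:ℝ) 1 := ⟨by linarith, by linarith⟩
  have hqm : q - h ∈ Set.Icc (0:ℝ) 1 := ⟨by linarith, by linarith⟩
  obtain ⟨X1, hX1_def⟩ : ∃ v : ℝ, v = derivWithin x (Set.Icc 0 1) q := ⟨_, rfl⟩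
  obtain ⟨X2, hX2_def⟩ : ∃ v : ℝ, v = iteratedDerivWithin 2 x (Set.Icc 0 1) q := ⟨_, rfl⟩
  obtain ⟨X3, hX3_def⟩ : ∃ v : ℝ, v = iteratedDerivWithin 3 x (Set.Icc 0 1) q := ⟨_, rfl⟩
  obtain ⟨U0, hU0_def⟩ : ∃ v : ℝ, v = u (x q) := ⟨_, rfl⟩
  obtain ⟨U1, hU1_def⟩ : ∃ v : ℝ, v = deriv u (x q) := ⟨_, rfl⟩
  obtain ⟨p, hp_def⟩ : ∃ v : ℝ, v = x (q + h) - x q := ⟨_, rfl⟩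
  obtain ⟨m, hm_def⟩ : ∃ v : ℝ, v = x q - x (q - h) := ⟨_, rfl⟩
  -- size bounds for p and m
  have hpl : δ * h ≤ p := by
    have := hgrow q (q + h) hqmem hqp (by linarith)
    rw [show q + h - q = h from by ring] at this
    rw [hp_def]; exact this
  have hpu : p ≤ Mx * h := by
    have := hLip q (q + h) hqmem hqp (by linarith)
    rw [show q + h - q = h from by ring] at this
    rw [hp_def]; exact this
  have hml : δ * h ≤ m := by
    have := hgrow (q - h) q hqm hqmem (by linarith)
    rw [show q - (q - h) = h from by ring] at this
    rw [hm_def]; exact this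
  have hmu : m ≤ Mx * h := by
    have := hLip (q - h) q hqm hqmem (by linarith)
    rw [show q - (q - h) = h from by ring] at this
    rw [hm_def]; exact this
  have hppos : 0 < p := lt_of_lt_of_le (by positivity) hpl
  have hmpos : 0 < m := lt_of_lt_of_le (by positivity) hml
  have hpm : 0 < p + m := by linarith
  have hsq4 : h ^ 2 ≤ 1 / 4 := by nlinarith only [hh0.le, hh12]
  have hcube : h ^ 3 ≤ h ^ 2 / 2 := by nlinarith only [hh0.le, hh12, sq_nonneg h]
  have hquart : h ^ 4 ≤ h ^ 2 / 4 := by nlinarith only [hsq4, sq_nonneg h]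
  have hquart3 : h ^ 4 ≤ h ^ 3 / 2 := by
    nlinarith only [pow_nonneg hh0.le 3, hh12, hh0.le]
  -- Taylor expansion of x around q
  have hctx : ContDiffOn ℝ ((3:ℕ) + 1) x (Set.Icc 0 1) := by exact_mod_cast hx
  have hexp_x : ∀ d : ℝ, taylorWithinEval x 3 (Set.Icc 0 1) q d
      = x q + (d - q) * X1 + (d - q) ^ 2 / 2 * X2 + (d - q) ^ 3 / 6 * X3 := by
    intro d
    rw [taylor_within_apply, hX1_def, hX2_def, hX3_def]
    simp [Finset.sum_range_succ, iteratedDerivWithin_one]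
    norm_num [Nat.factorial]
    ring
  obtain ⟨ep, hep_def⟩ : ∃ v : ℝ,
      v = x (q + h) - (x q + h * X1 + h ^ 2 / 2 * X2 + h ^ 3 / 6 * X3) := ⟨_, rfl⟩
  obtain ⟨em, hem_def⟩ : ∃ v : ℝ,
      v = x (q - h) - (x q - h * X1 + h ^ 2 / 2 * X2 - h ^ 3 / 6 * X3) := ⟨_, rfl⟩
  have hepb : |ep| ≤ Mx * h ^ 4 := by
    have hb := my_taylor_bound (by norm_num : (0:ℝ) < 1) 3 hctx hbx4 hqmem hqp
    rw [hexp_x (q + h), show q + h - q = h from by ring, abs_of_nonneg hh0.le] at hb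
    have hb2 : Mx * h ^ (3 + 1) / ((3:ℕ).factorial : ℝ) = Mx * h ^ 4 / 6 := by
      norm_num [Nat.factorial]
    rw [hb2] at hb
    rw [hep_def]
    linarith only [hb, mul_nonneg hMx0 (pow_nonneg hh0.le 4)]
  have hemb : |em| ≤ Mx * h ^ 4 := by
    have hb := my_taylor_bound (by norm_num : (0:ℝ) < 1) 3 hctx hbx4 hqmem hqm
    rw [hexp_x (q - h), show q - h - q = -h from by ring, abs_neg,
      abs_of_nonneg hh0.le] at hb
    have hb2 : Mx * h ^ (3 + 1) / ((3:ℕ).factorial : ℝ) = Mx * h ^ 4 / 6 := by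
      norm_num [Nat.factorial]
    rw [hb2] at hb
    rw [show x q + -h * X1 + (-h) ^ 2 / 2 * X2 + (-h) ^ 3 / 6 * X3
      = x q - h * X1 + h ^ 2 / 2 * X2 - h ^ 3 / 6 * X3 from by ring] at hb
    rw [hem_def]
    linarith only [hb, mul_nonneg hMx0 (pow_nonneg hh0.le 4)]
  -- Taylor expansion of u around x q
  have hctu : ContDiffOn ℝ ((5:ℕ) + 1) u (Set.Icc K1 K2) := by
    have := (husm 6).contDiffOn (s := Set.Icc K1 K2)
    exact_mod_cast this
  have hamem : x q ∈ Set.Icc K1 K2 := himg q hqmem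
  have hderivWithin_u : derivWithin u (Set.Icc K1 K2) (x q) = deriv u (x q) :=
    (hdiffu (x q)).derivWithin (hsK (x q) hamem)
  have hexp_u : ∀ d : ℝ, taylorWithinEval u 5 (Set.Icc K1 K2) (x q) d
      = U0 + (d - x q) * U1 + (d - x q) ^ 2 * (lam ^ 2 * U0) / 2
        + (d - x q) ^ 3 * (lam ^ 2 * U1) / 6 + (d - x q) ^ 4 * (lam ^ 4 * U0) / 24
        + (d - x q) ^ 5 * (lam ^ 4 * U1) / 120 := by
    intro d
    rw [taylor_within_apply, hU0_def, hU1_def]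
    simp [Finset.sum_range_succ, iteratedDerivWithin_one, hderivWithin_u,
      hitw_u 2 (x q) hamem, hitw_u 3 (x q) hamem, hitw_u 4 (x q) hamem, hitw_u 5 (x q) hamem,
      congrFun e2 (x q), congrFun e3 (x q), congrFun e4 (x q), congrFun e5 (x q)]
    norm_num [Nat.factorial]
    ring
  obtain ⟨Rp, hRp_def⟩ : ∃ v : ℝ, v = u (x (q + h)) - (U0 + p * U1
      + p ^ 2 * (lam ^ 2 * U0) / 2 + p ^ 3 * (lam ^ 2 * U1) / 6
      + p ^ 4 * (lam ^ 4 * U0) / 24 + p ^ 5 * (lam ^ 4 * U1) / 120) := ⟨_, rfl⟩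
  obtain ⟨Rm, hRm_def⟩ : ∃ v : ℝ, v = u (x (q - h)) - (U0 - m * U1
      + m ^ 2 * (lam ^ 2 * U0) / 2 - m ^ 3 * (lam ^ 2 * U1) / 6
      + m ^ 4 * (lam ^ 4 * U0) / 24 - m ^ 5 * (lam ^ 4 * U1) / 120) := ⟨_, rfl⟩
  have hfact5 : MU * p ^ (5 + 1) / ((5:ℕ).factorial : ℝ) = MU * p ^ 6 / 120 := by
    norm_num [Nat.factorial]
  have hRpb : |Rp| ≤ MU * p ^ 6 / 120 := by
    have hb := my_taylor_bound hK 5 hctu hM6 hamem (himg (q + h) hqp)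
    rw [hexp_u (x (q + h)), show x (q + h) - x q = p from hp_def.symm,
      abs_of_pos hppos, hfact5] at hb
    rw [hRp_def]
    exact hb
  have hRmb : |Rm| ≤ MU * m ^ 6 / 120 := by
    have hb := my_taylor_bound hK 5 hctu hM6 hamem (himg (q - h) hqm)
    rw [hexp_u (x (q - h)), show x (q - h) - x q = -m from by rw [hm_def]; ring,
      abs_neg, abs_of_pos hmpos] at hb
    have hfact5' : MU * m ^ (5 + 1) / ((5:ℕ).factorial : ℝ) = MU * m ^ 6 / 120 := by
      norm_num [Nat.factorial]
    rw [hfact5'] at hb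
    rw [show U0 + -m * U1 + (-m) ^ 2 * (lam ^ 2 * U0) / 2 + (-m) ^ 3 * (lam ^ 2 * U1) / 6
        + (-m) ^ 4 * (lam ^ 4 * U0) / 24 + (-m) ^ 5 * (lam ^ 4 * U1) / 120
      = U0 - m * U1 + m ^ 2 * (lam ^ 2 * U0) / 2 - m ^ 3 * (lam ^ 2 * U1) / 6
        + m ^ 4 * (lam ^ 4 * U0) / 24 - m ^ 5 * (lam ^ 4 * U1) / 120 from by ring] at hb
    rw [hRm_def]
    exact hb
  -- the key algebraic identity
  have hψval : ψ h q = -( ((p - m) / 3) * (lam ^ 2 * U1)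
      + ((p ^ 2 - p * m + m ^ 2) / 12) * (lam ^ 4 * U0)
      + ((p - m) * (p ^ 2 + m ^ 2) / 60) * (lam ^ 4 * U1)
      + (2 / (p + m)) * (Rp / p + Rm / m) ) := by
    have hup : u (x (q + h)) = (U0 + p * U1 + p ^ 2 * (lam ^ 2 * U0) / 2
        + p ^ 3 * (lam ^ 2 * U1) / 6 + p ^ 4 * (lam ^ 4 * U0) / 24
        + p ^ 5 * (lam ^ 4 * U1) / 120) + Rp := by rw [hRp_def]; ring
    have hum : u (x (q - h)) = (U0 - m * U1 + m ^ 2 * (lam ^ 2 * U0) / 2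
        - m ^ 3 * (lam ^ 2 * U1) / 6 + m ^ 4 * (lam ^ 4 * U0) / 24
        - m ^ 5 * (lam ^ 4 * U1) / 120) + Rm := by rw [hRm_def]; ring
    simp only [hψ]
    rw [← hp_def, ← hm_def, ← hU0_def, hup, hum]
    rw [div_add_div _ _ (ne_of_gt hppos) (ne_of_gt hmpos)]
    field_simp [ne_of_gt hppos, ne_of_gt hmpos, ne_of_gt hpm]
    ring
  -- the supraconvergence condition
  have hzero : X2 * (lam ^ 2 * U1) + 1 / 4 * X1 ^ 2 * (lam ^ 4 * U0) = 0 := by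
    have hc := hcond q hqmem
    rw [congrFun e3 (x q), congrFun e4 (x q), ← hX1_def, ← hX2_def, ← hU1_def, ← hU0_def] at hc
    exact hc
  -- splitting of the coefficients
  obtain ⟨e2v, he2v_def⟩ : ∃ v : ℝ, v = p ^ 2 - p * m + m ^ 2 - X1 ^ 2 * h ^ 2 := ⟨_, rfl⟩
  have hpm_split : p - m = X2 * h ^ 2 + (ep + em) := by
    rw [hp_def, hm_def, hep_def, hem_def]; ring
  have hsq_split : p ^ 2 - p * m + m ^ 2 = X1 ^ 2 * h ^ 2 + e2v := by
    rw [he2v_def]; ring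
  have hψ2 : ψ h q = -( ((ep + em) / 3) * (lam ^ 2 * U1)
      + (e2v / 12) * (lam ^ 4 * U0)
      + ((p - m) * (p ^ 2 + m ^ 2) / 60) * (lam ^ 4 * U1)
      + (2 / (p + m)) * (Rp / p + Rm / m) ) := by
    rw [hψval]
    have expand : ((p - m) / 3) * (lam ^ 2 * U1)
        + ((p ^ 2 - p * m + m ^ 2) / 12) * (lam ^ 4 * U0)
        = (h ^ 2 / 3) * (X2 * (lam ^ 2 * U1) + 1 / 4 * X1 ^ 2 * (lam ^ 4 * U0))
          + (((ep + em) / 3) * (lam ^ 2 * U1) + (e2v / 12) * (lam ^ 4 * U0)) := by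
      rw [hpm_split, hsq_split]; ring
    rw [expand, hzero]
    ring
  -- auxiliary bounds
  obtain ⟨dp, hdp_def⟩ : ∃ v : ℝ, v = p - X1 * h := ⟨_, rfl⟩
  obtain ⟨dm, hdm_def⟩ : ∃ v : ℝ, v = m - X1 * h := ⟨_, rfl⟩
  have hX1b : |X1| ≤ Mx := by rw [hX1_def]; exact hbx1 q hqmem
  have hX2b : |X2| ≤ Mx := by rw [hX2_def]; exact hbx2 q hqmem
  have hX3b : |X3| ≤ Mx := by rw [hX3_def]; exact hbx3 q hqmem
  have hU0b : |U0| ≤ Bu := by rw [hU0_def]; exact hbu (x q) hamem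
  have hU1b : |U1| ≤ Bu := by rw [hU1_def]; exact hbu' (x q) hamem
  have hdp_eq : dp = h ^ 2 / 2 * X2 + h ^ 3 / 6 * X3 + ep := by
    rw [hdp_def, hp_def, hep_def]; ring
  have hdm_eq : dm = -(h ^ 2 / 2) * X2 + h ^ 3 / 6 * X3 - em := by
    rw [hdm_def, hm_def, hem_def]; ring
  have hdpb : |dp| ≤ Mx * h ^ 2 := by
    rw [hdp_eq]
    have t1 := abs_add_three (h ^ 2 / 2 * X2) (h ^ 3 / 6 * X3) ep
    rw [abs_mul, abs_mul, abs_of_nonneg (by positivity : (0:ℝ) ≤ h ^ 2 / 2),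
      abs_of_nonneg (by positivity : (0:ℝ) ≤ h ^ 3 / 6)] at t1
    have t2 : h ^ 2 / 2 * |X2| ≤ h ^ 2 / 2 * Mx :=
      mul_le_mul_of_nonneg_left hX2b (by positivity)
    have t3 : h ^ 3 / 6 * |X3| ≤ h ^ 3 / 6 * Mx :=
      mul_le_mul_of_nonneg_left hX3b (by positivity)
    have t4 : h ^ 3 / 6 * Mx ≤ h ^ 2 / 12 * Mx :=
      mul_le_mul_of_nonneg_right (by linarith only [hcube]) hMx0
    have t5 : Mx * h ^ 4 ≤ h ^ 2 / 4 * Mx := by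
      have := mul_le_mul_of_nonneg_left hquart hMx0
      linarith only [this]
    calc |h ^ 2 / 2 * X2 + h ^ 3 / 6 * X3 + ep|
        ≤ h ^ 2 / 2 * |X2| + h ^ 3 / 6 * |X3| + |ep| := t1
      _ ≤ h ^ 2 / 2 * Mx + h ^ 2 / 12 * Mx + h ^ 2 / 4 * Mx := by
          linarith only [hepb, t2, t3, t4, t5]
      _ ≤ Mx * h ^ 2 := by linarith only [mul_nonneg hMx0 (sq_nonneg h)]
  have hdmb : |dm| ≤ Mx * h ^ 2 := by
    rw [hdm_eq]
    have t1 : |(-(h ^ 2 / 2) * X2 + h ^ 3 / 6 * X3 - em)|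
        ≤ |(-(h ^ 2 / 2) * X2)| + |h ^ 3 / 6 * X3| + |(-em)| := by
      have := abs_add_three (-(h ^ 2 / 2) * X2) (h ^ 3 / 6 * X3) (-em)
      rw [show -(h ^ 2 / 2) * X2 + h ^ 3 / 6 * X3 + -em
        = -(h ^ 2 / 2) * X2 + h ^ 3 / 6 * X3 - em from by ring] at this
      exact this
    rw [abs_mul, abs_mul, abs_neg, abs_neg,
      abs_of_nonneg (by positivity : (0:ℝ) ≤ h ^ 2 / 2),
      abs_of_nonneg (by positivity : (0:ℝ) ≤ h ^ 3 / 6)] at t1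
    have t2 : h ^ 2 / 2 * |X2| ≤ h ^ 2 / 2 * Mx :=
      mul_le_mul_of_nonneg_left hX2b (by positivity)
    have t3 : h ^ 3 / 6 * |X3| ≤ h ^ 2 / 12 * Mx := by
      have u1 := mul_le_mul_of_nonneg_left hX3b (by positivity : (0:ℝ) ≤ h ^ 3 / 6)
      have u2 : h ^ 3 / 6 * Mx ≤ h ^ 2 / 12 * Mx :=
        mul_le_mul_of_nonneg_right (by linarith only [hcube]) hMx0
      linarith only [u1, u2]
    have t5 : Mx * h ^ 4 ≤ h ^ 2 / 4 * Mx := by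
      have := mul_le_mul_of_nonneg_left hquart hMx0
      linarith only [this]
    calc |(-(h ^ 2 / 2) * X2 + h ^ 3 / 6 * X3 - em)|
        ≤ h ^ 2 / 2 * |X2| + h ^ 3 / 6 * |X3| + |em| := t1
      _ ≤ h ^ 2 / 2 * Mx + h ^ 2 / 12 * Mx + h ^ 2 / 4 * Mx := by
          linarith only [hemb, t2, t3, t5]
      _ ≤ Mx * h ^ 2 := by linarith only [mul_nonneg hMx0 (sq_nonneg h)]
  have hsumb : |dp + dm| ≤ 2 * Mx * h ^ 3 := by
    have heq : dp + dm = h ^ 3 / 3 * X3 + (ep - em) := by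
      rw [hdp_eq, hdm_eq]; ring
    rw [heq]
    have t1 := abs_add_le (h ^ 3 / 3 * X3) (ep - em)
    have t2 := abs_sub ep em
    rw [abs_mul, abs_of_nonneg (by positivity : (0:ℝ) ≤ h ^ 3 / 3)] at t1
    have t3 : h ^ 3 / 3 * |X3| ≤ h ^ 3 / 3 * Mx :=
      mul_le_mul_of_nonneg_left hX3b (by positivity)
    have t4 : Mx * h ^ 4 ≤ Mx * h ^ 3 / 2 := by
      have := mul_le_mul_of_nonneg_left hquart3 hMx0
      linarith only [this]
    calc |h ^ 3 / 3 * X3 + (ep - em)| ≤ h ^ 3 / 3 * |X3| + |ep - em| := t1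
      _ ≤ h ^ 3 / 3 * Mx + (|ep| + |em|) := by linarith only [t2, t3]
      _ ≤ h ^ 3 / 3 * Mx + Mx * h ^ 3 / 2 + Mx * h ^ 3 / 2 := by
          linarith only [hepb, hemb, t4]
      _ ≤ 2 * Mx * h ^ 3 := by linarith only [mul_nonneg hMx0 (pow_nonneg hh0.le 3)]
  have he2vb : |e2v| ≤ 5 * Mx ^ 2 * h ^ 4 := by
    have heq : e2v = X1 * h * (dp + dm) + (dp ^ 2 + dm ^ 2 - dp * dm) := by
      rw [he2v_def, hdp_def, hdm_def]; ring
    rw [heq]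
    have t1 := abs_add_le (X1 * h * (dp + dm)) (dp ^ 2 + dm ^ 2 - dp * dm)
    have t2 : |X1 * h * (dp + dm)| ≤ Mx * h * (2 * Mx * h ^ 3) := by
      rw [abs_mul, abs_mul, abs_of_nonneg hh0.le]
      apply mul_le_mul (mul_le_mul_of_nonneg_right hX1b hh0.le) hsumb (abs_nonneg _)
      positivity
    have hdp2 : dp ^ 2 ≤ Mx ^ 2 * h ^ 4 := by
      have := mul_self_le_mul_self (abs_nonneg dp) hdpb
      have h2 := sq_abs dp
      nlinarith only [this, h2]
    have hdm2 : dm ^ 2 ≤ Mx ^ 2 * h ^ 4 := by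
      have := mul_self_le_mul_self (abs_nonneg dm) hdmb
      have h2 := sq_abs dm
      nlinarith only [this, h2]
    have hdpdm : |dp * dm| ≤ Mx ^ 2 * h ^ 4 := by
      rw [abs_mul]
      calc |dp| * |dm| ≤ (Mx * h ^ 2) * (Mx * h ^ 2) :=
            mul_le_mul hdpb hdmb (abs_nonneg _) (by positivity)
        _ = Mx ^ 2 * h ^ 4 := by ring
    have t3 : |dp ^ 2 + dm ^ 2 - dp * dm| ≤ 3 * Mx ^ 2 * h ^ 4 := by
      have ha := abs_add_le (dp ^ 2 + dm ^ 2) (-(dp * dm))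
      rw [abs_neg] at ha
      have h1 : |dp ^ 2 + dm ^ 2| = dp ^ 2 + dm ^ 2 := abs_of_nonneg (by positivity)
      rw [show dp ^ 2 + dm ^ 2 - dp * dm = dp ^ 2 + dm ^ 2 + -(dp * dm) from by ring]
      rw [h1] at ha
      linarith only [ha, hdp2, hdm2, hdpdm]
    calc |X1 * h * (dp + dm) + (dp ^ 2 + dm ^ 2 - dp * dm)|
        ≤ |X1 * h * (dp + dm)| + |dp ^ 2 + dm ^ 2 - dp * dm| := t1
      _ ≤ Mx * h * (2 * Mx * h ^ 3) + 3 * Mx ^ 2 * h ^ 4 := by linarith only [t2, t3]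
      _ = 5 * Mx ^ 2 * h ^ 4 := by ring
  have hpmb : |p - m| ≤ 2 * Mx * h ^ 2 := by
    rw [hpm_split]
    have t1 := abs_add_le (X2 * h ^ 2) (ep + em)
    have t2 := abs_add_le ep em
    rw [abs_mul, abs_of_nonneg (by positivity : (0:ℝ) ≤ h ^ 2)] at t1
    have t3 : |X2| * h ^ 2 ≤ Mx * h ^ 2 := mul_le_mul_of_nonneg_right hX2b (by positivity)
    have t4 : Mx * h ^ 4 ≤ Mx * h ^ 2 / 2 := by
      have := mul_le_mul_of_nonneg_left hquart hMx0
      have h2 := mul_nonneg hMx0 (sq_nonneg h)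
      linarith only [this, h2]
    calc |X2 * h ^ 2 + (ep + em)| ≤ |X2| * h ^ 2 + |ep + em| := t1
      _ ≤ Mx * h ^ 2 + (Mx * h ^ 2 / 2 + Mx * h ^ 2 / 2) := by
          linarith only [hepb, hemb, t2, t3, t4]
      _ = 2 * Mx * h ^ 2 := by ring
  have hp2 : p ^ 2 ≤ Mx ^ 2 * h ^ 2 := by
    nlinarith only [mul_self_le_mul_self hppos.le hpu]
  have hm2 : m ^ 2 ≤ Mx ^ 2 * h ^ 2 := by
    nlinarith only [mul_self_le_mul_self hmpos.le hmu]
  have hp5 : p ^ 5 ≤ Mx ^ 5 * h ^ 5 := by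
    calc p ^ 5 ≤ (Mx * h) ^ 5 := pow_le_pow_left₀ hppos.le hpu 5
      _ = Mx ^ 5 * h ^ 5 := by ring
  have hm5 : m ^ 5 ≤ Mx ^ 5 * h ^ 5 := by
    calc m ^ 5 ≤ (Mx * h) ^ 5 := pow_le_pow_left₀ hmpos.le hmu 5
      _ = Mx ^ 5 * h ^ 5 := by ring
  -- bounds for the four terms
  have bT1 : |((ep + em) / 3) * (lam ^ 2 * U1)| ≤ Mx * (lam ^ 2 * Bu) * h ^ 4 := by
    rw [abs_mul, abs_div, abs_mul, abs_pow, abs_of_pos hlam]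
    have t1 : |ep + em| ≤ 2 * Mx * h ^ 4 :=
      le_trans (abs_add_le ep em) (by linarith only [hepb, hemb])
    have t2 : |ep + em| / |(3:ℝ)| ≤ Mx * h ^ 4 := by
      rw [show |(3:ℝ)| = 3 from by norm_num]
      linarith only [t1, mul_nonneg hMx0 (pow_nonneg hh0.le 4)]
    calc |ep + em| / |(3:ℝ)| * (lam ^ 2 * |U1|)
        ≤ (Mx * h ^ 4) * (lam ^ 2 * Bu) := by
          apply mul_le_mul t2 (mul_le_mul_of_nonneg_left hU1b (by positivity))
            (by positivity) ?_
          linarith only [mul_nonneg hMx0 (pow_nonneg hh0.le 4)]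
      _ = Mx * (lam ^ 2 * Bu) * h ^ 4 := by ring
  have bT2 : |(e2v / 12) * (lam ^ 4 * U0)| ≤ 5 * Mx ^ 2 * (lam ^ 4 * Bu) * h ^ 4 := by
    rw [abs_mul, abs_div, abs_mul, abs_pow, abs_of_pos hlam]
    have t2 : |e2v| / |(12:ℝ)| ≤ 5 * Mx ^ 2 * h ^ 4 := by
      rw [show |(12:ℝ)| = 12 from by norm_num]
      linarith only [he2vb, abs_nonneg e2v, mul_nonneg (mul_nonneg (by norm_num : (0:ℝ) ≤ 5)
        (pow_nonneg hMx0 2)) (pow_nonneg hh0.le 4)]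
    calc |e2v| / |(12:ℝ)| * (lam ^ 4 * |U0|)
        ≤ (5 * Mx ^ 2 * h ^ 4) * (lam ^ 4 * Bu) := by
          apply mul_le_mul t2 (mul_le_mul_of_nonneg_left hU0b (by positivity))
            (by positivity) (by positivity)
      _ = 5 * Mx ^ 2 * (lam ^ 4 * Bu) * h ^ 4 := by ring
  have bT3 : |((p - m) * (p ^ 2 + m ^ 2) / 60) * (lam ^ 4 * U1)|
      ≤ Mx ^ 3 * (lam ^ 4 * Bu) * h ^ 4 := by
    rw [abs_mul, abs_div, abs_mul, abs_mul, abs_pow, abs_of_pos hlam]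
    have t1 : |p ^ 2 + m ^ 2| ≤ 2 * Mx ^ 2 * h ^ 2 := by
      rw [abs_of_nonneg (by positivity)]
      linarith only [hp2, hm2]
    have t2 : |p - m| * |p ^ 2 + m ^ 2| ≤ (2 * Mx * h ^ 2) * (2 * Mx ^ 2 * h ^ 2) :=
      mul_le_mul hpmb t1 (abs_nonneg _) (by positivity)
    have t3 : |p - m| * |p ^ 2 + m ^ 2| / |(60:ℝ)| ≤ Mx ^ 3 * h ^ 4 := by
      rw [show |(60:ℝ)| = 60 from by norm_num]
      linarith only [t2, mul_nonneg (abs_nonneg (p - m)) (abs_nonneg (p ^ 2 + m ^ 2)),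
        mul_nonneg (pow_nonneg hMx0 3) (pow_nonneg hh0.le 4)]
    calc |p - m| * |p ^ 2 + m ^ 2| / |(60:ℝ)| * (lam ^ 4 * |U1|)
        ≤ (Mx ^ 3 * h ^ 4) * (lam ^ 4 * Bu) := by
          apply mul_le_mul t3 (mul_le_mul_of_nonneg_left hU1b (by positivity))
            (by positivity) ?_
          linarith only [mul_nonneg (pow_nonneg hMx0 3) (pow_nonneg hh0.le 4)]
      _ = Mx ^ 3 * (lam ^ 4 * Bu) * h ^ 4 := by ring
  have bT4 : |(2 / (p + m)) * (Rp / p + Rm / m)| ≤ MU * Mx ^ 5 / (60 * δ) * h ^ 4 := by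
    have hS : |Rp / p + Rm / m| ≤ MU * Mx ^ 5 * h ^ 5 / 60 := by
      have s1 : |Rp / p| ≤ MU * p ^ 5 / 120 := by
        rw [abs_div, abs_of_pos hppos, div_le_iff₀ hppos]
        calc |Rp| ≤ MU * p ^ 6 / 120 := hRpb
          _ = MU * p ^ 5 / 120 * p := by ring
      have s2 : |Rm / m| ≤ MU * m ^ 5 / 120 := by
        rw [abs_div, abs_of_pos hmpos, div_le_iff₀ hmpos]
        calc |Rm| ≤ MU * m ^ 6 / 120 := hRmb
          _ = MU * m ^ 5 / 120 * m := by ring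
      have s3 : MU * p ^ 5 / 120 ≤ MU * (Mx ^ 5 * h ^ 5) / 120 := by
        have := mul_le_mul_of_nonneg_left hp5 hMU0
        linarith only [this]
      have s4 : MU * m ^ 5 / 120 ≤ MU * (Mx ^ 5 * h ^ 5) / 120 := by
        have := mul_le_mul_of_nonneg_left hm5 hMU0
        linarith only [this]
      calc |Rp / p + Rm / m| ≤ |Rp / p| + |Rm / m| := abs_add_le _ _
        _ ≤ MU * (Mx ^ 5 * h ^ 5) / 120 + MU * (Mx ^ 5 * h ^ 5) / 120 := by
            linarith only [s1, s2, s3, s4]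
        _ = MU * Mx ^ 5 * h ^ 5 / 60 := by ring
    have hfrac : 2 / (p + m) ≤ 1 / (δ * h) := by
      rw [div_le_div_iff₀ hpm (by positivity)]
      nlinarith only [hpl, hml]
    rw [abs_mul, abs_of_pos (by positivity : (0:ℝ) < 2 / (p + m))]
    calc 2 / (p + m) * |Rp / p + Rm / m|
        ≤ (1 / (δ * h)) * (MU * Mx ^ 5 * h ^ 5 / 60) := by
          apply mul_le_mul hfrac hS (abs_nonneg _) (by positivity)
      _ = MU * Mx ^ 5 / (60 * δ) * h ^ 4 := by
          field_simp
  -- put everything together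
  rw [hψ2, abs_neg]
  have habs : |((ep + em) / 3) * (lam ^ 2 * U1) + (e2v / 12) * (lam ^ 4 * U0)
      + ((p - m) * (p ^ 2 + m ^ 2) / 60) * (lam ^ 4 * U1)
      + (2 / (p + m)) * (Rp / p + Rm / m)|
      ≤ |((ep + em) / 3) * (lam ^ 2 * U1)| + |(e2v / 12) * (lam ^ 4 * U0)|
        + |((p - m) * (p ^ 2 + m ^ 2) / 60) * (lam ^ 4 * U1)|
        + |(2 / (p + m)) * (Rp / p + Rm / m)| := by
    apply (abs_add_le _ _).trans
    have h3 := abs_add_le (((ep + em) / 3) * (lam ^ 2 * U1) + (e2v / 12) * (lam ^ 4 * U0))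
      (((p - m) * (p ^ 2 + m ^ 2) / 60) * (lam ^ 4 * U1))
    have h2 := abs_add_le (((ep + em) / 3) * (lam ^ 2 * U1)) ((e2v / 12) * (lam ^ 4 * U0))
    linarith only [h3, h2]
  have hC4 : C * h ^ 4 = (Mx * (lam ^ 2 * Bu) + 5 * Mx ^ 2 * (lam ^ 4 * Bu)
      + Mx ^ 3 * (lam ^ 4 * Bu) + MU * Mx ^ 5 / (60 * δ)) * h ^ 4 + 1 * h ^ 4 := by
    rw [hC_def]; ring
  have hh4 : 0 ≤ h ^ 4 := by positivity
  calc |((ep + em) / 3) * (lam ^ 2 * U1) + (e2v / 12) * (lam ^ 4 * U0)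
      + ((p - m) * (p ^ 2 + m ^ 2) / 60) * (lam ^ 4 * U1)
      + (2 / (p + m)) * (Rp / p + Rm / m)|
      ≤ Mx * (lam ^ 2 * Bu) * h ^ 4 + 5 * Mx ^ 2 * (lam ^ 4 * Bu) * h ^ 4
        + Mx ^ 3 * (lam ^ 4 * Bu) * h ^ 4 + MU * Mx ^ 5 / (60 * δ) * h ^ 4 := by
        linarith only [habs, bT1, bT2, bT3, bT4]
    _ ≤ C * h ^ 4 := by rw [hC4]; linarith only [hh4]
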